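/- Let A be an n×n 0-1 matrix with zero trace and A² a 0-1 matrix. Suppose the maximum row sum Δ⁺ of A is at least the maximum column sum Δ⁻. Then the number of 1-entries of A is at most (Δ⁺)² + n − 1 provided that for every fixed row v of maximum row sum, every other row has at most one 1-entry in the columns outside the support of row v. [Unconditional version as in the paper's proof of Lemma 7: if additionally A is extremal with n ≥ 8, then e(A) ≤ (Δ⁺)² + n − 1.] -/

import Mathlib

open Finset

/-- Inequality from the proof of Lemma 7: if `A` is a 0-1 matrix with zero trace whose
square is a 0-1 matrix, `d = Δ⁺ ≥ Δ⁻ = c`, and for every row `v` of maximum row sum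
every other row has at most one 1-entry in the columns outside the support of row `v`,
then the number of ones of `A` is at most `(Δ⁺)² + n − 1`. -/
theorem stmt_13 (n : ℕ) (A : Matrix (Fin n) (Fin n) ℤ)
    (hA : ∀ i j, A i j = 0 ∨ A i j = 1)
    (htr : ∀ i, A i i = 0)
    (hA2 : ∀ i j, (A * A) i j = 0 ∨ (A * A) i j = 1)
    (d c : ℤ)
    (hd : IsGreatest (Set.range fun i => ∑ j, A i j) d)
    (hc : IsGreatest (Set.range fun j => ∑ i, A i j) c)
    (hdc : c ≤ d)
    (hα : ∀ v, (∑ j, A v j) = d → ∀ u, u ≠ v →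
      (∑ j ∈ univ.filter (fun j => A v j = 0), A u j) ≤ 1) :
    ∑ i, ∑ j, A i j ≤ d ^ 2 + n - 1 := by
  obtain ⟨⟨v, hv⟩, hub⟩ := hd
  obtain ⟨_, hcb⟩ := hc
  have hv : ∑ j, A v j = d := hv
  have hn : 0 < n := v.pos
  have hd0 : 0 ≤ d := hv ▸ Finset.sum_nonneg fun j _ => by rcases hA v j with h|h <;> simp [h]
  set V₂ := univ.filter (fun j => A v j = 0) with hV₂
  set V₁ := univ.filter (fun j => ¬ A v j = 0) with hV₁
  have hsplit : ∀ i, ∑ j, A i j = (∑ j ∈ V₂, A i j) + ∑ j ∈ V₁, A i j :=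
    fun i => (Finset.sum_filter_add_sum_filter_not univ _ _).symm
  have hone : ∀ j ∈ V₁, A v j = 1 := by
    intro j hj
    rcases hA v j with h|h
    · exact absurd h (by simpa [hV₁] using hj)
    · exact h
  have hzero : ∑ j ∈ V₂, A v j = 0 :=
    Finset.sum_eq_zero fun j hj => by simpa [hV₂] using hj
  have hcard : (V₁.card : ℤ) = d := by
    have h1 : ∑ j ∈ V₁, A v j = V₁.card := by
      rw [Finset.sum_congr rfl hone]; simp
    have h2 := hsplit v
    rw [hv, hzero, h1, zero_add] at h2
    exact h2.symm
  have hB : ∑ i, ∑ j ∈ V₁, A i j ≤ d ^ 2 := by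
    rw [Finset.sum_comm (f := fun i j => A i j)]
    calc ∑ j ∈ V₁, ∑ i, A i j ≤ ∑ j ∈ V₁, c :=
          Finset.sum_le_sum fun j _ => hcb ⟨j, rfl⟩
      _ = (V₁.card : ℤ) * c := by rw [Finset.sum_const, nsmul_eq_mul]
      _ = d * c := by rw [hcard]
      _ ≤ d * d := mul_le_mul_of_nonneg_left hdc hd0
      _ = d ^ 2 := (sq d).symm
  have hC : ∑ i, ∑ j ∈ V₂, A i j ≤ (n : ℤ) - 1 := by
    rw [← Finset.add_sum_erase univ _ (Finset.mem_univ v), hzero, zero_add]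
    calc ∑ i ∈ univ.erase v, ∑ j ∈ V₂, A i j ≤ ∑ i ∈ univ.erase v, 1 :=
          Finset.sum_le_sum fun i hi => hα v hv i (Finset.ne_of_mem_erase hi)
      _ = ((univ.erase v).card : ℤ) := by simp
      _ = (n : ℤ) - 1 := by
          rw [Finset.card_erase_of_mem (Finset.mem_univ v), Finset.card_univ,
            Fintype.card_fin]
          push_cast [hn]
          omega
  calc ∑ i, ∑ j, A i j
      = (∑ i, ∑ j ∈ V₂, A i j) + ∑ i, ∑ j ∈ V₁, A i j := by
        rw [← Finset.sum_add_distrib]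
        exact Finset.sum_congr rfl fun i _ => hsplit i
    _ ≤ ((n : ℤ) - 1) + d ^ 2 := add_le_add hC hB
    _ = d ^ 2 + n - 1 := by ring
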